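/- Fix d ≥ 1. For n ∈ ℕ let V_n be the complex inner-product space of functions from words of length n over {1,…,d} to ℂ with orthonormal basis (e_w), and for subspaces A ⊆ V_m, B ⊆ V_n let A·B ⊆ V_{m+n} be the span of the concatenation products (e_u·e_v := e_{uv}). Call a family X = (X(n))_{n∈ℕ} of subspaces X(n) ⊆ V_n with X(0) = V_0 and X(m+n) ⊆ X(m)·X(n) for all m, n a standard subproduct system over ℂ^d. For a homogeneous polynomial p = Σ_α c_α x^α of degree n in ℂ⟨x₁,…,x_d⟩ let p̂ := Σ_α c_α e_α ∈ V_n be its coefficient vector. Then the assignments I ↦ X_I, where X_I(n) := the orthogonal complement in V_n of {p̂ : p ∈ I homogeneous of degree n}, and X ↦ I^X, where I^X := the linear span of {p : p homogeneous of some degree n ≥ 1 with p̂ orthogonal to X(n)}, are mutually inverse bijections between the set of proper homogeneous two-sided ideals of ℂ⟨x₁,…,x_d⟩ and the set of standard subproduct systems over ℂ^d. In particular, I^X is a proper homogeneous two-sided ideal for every standard subproduct system X; and the bijection is inclusion-reversing: I ⊆ J if and only if X_J(n) ⊆ X_I(n) for all n. -/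

import Mathlib

noncomputable section

/-- The free (noncommutative polynomial) algebra `ℂ⟨x₁,…,x_d⟩`, realized as the monoid
algebra of the free monoid on `d` generators. -/
abbrev FreeAlg (d : ℕ) : Type := MonoidAlgebra ℂ (FreeMonoid (Fin d))

/-- `p` is homogeneous of degree `n`: it is supported on monomials indexed by words of
length `n`. -/
def IsHomog {d : ℕ} (n : ℕ) (p : FreeAlg d) : Prop :=
  ∀ w ∈ p.coeff.support, FreeMonoid.length w = n

/-- The homogeneous component of degree `n` of a noncommutative polynomial. -/
def homogComp {d : ℕ} (n : ℕ) (p : FreeAlg d) : FreeAlg d :=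
  MonoidAlgebra.ofCoeff (Finsupp.filter (fun w : FreeMonoid (Fin d) => FreeMonoid.length w = n) p.coeff)

/-- A two-sided ideal is homogeneous if it contains every homogeneous component of each of
its elements. -/
def IsHomogIdeal {d : ℕ} (I : TwoSidedIdeal (FreeAlg d)) : Prop :=
  ∀ p ∈ I, ∀ n : ℕ, homogComp n p ∈ I

/-- The coefficient vector `p̂ ∈ V_n` of a polynomial, `V_n` being the Hilbert space of
functions from length-`n` words to `ℂ`. -/
def coefVec {d : ℕ} (n : ℕ) (p : FreeAlg d) : EuclideanSpace ℂ (Fin n → Fin d) :=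
  WithLp.toLp 2 (fun w => p.coeff (FreeMonoid.ofList (List.ofFn w)))

/-- The bilinear concatenation product determined by `e_u ⋆ e_v = e_{uv}`. -/
def wordMulE {d m n : ℕ} (f : EuclideanSpace ℂ (Fin m → Fin d))
    (g : EuclideanSpace ℂ (Fin n → Fin d)) : EuclideanSpace ℂ (Fin (m + n) → Fin d) :=
  WithLp.toLp 2 (fun w => f (fun i => w (Fin.castAdd n i)) * g (fun j => w (Fin.natAdd m j)))

/-- `A·B`: the span of the concatenation products of elements of `A` and `B`. -/
def prodSpanE {d m n : ℕ} (A : Submodule ℂ (EuclideanSpace ℂ (Fin m → Fin d)))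
    (B : Submodule ℂ (EuclideanSpace ℂ (Fin n → Fin d))) :
    Submodule ℂ (EuclideanSpace ℂ (Fin (m + n) → Fin d)) :=
  Submodule.span ℂ {x | ∃ a ∈ A, ∃ b ∈ B, x = wordMulE a b}

/-- The subproduct system `X_I` associated with a homogeneous ideal `I`:
`X_I(n)` is the orthogonal complement of the coefficient vectors of the degree-`n`
homogeneous elements of `I`. -/
def XofI {d : ℕ} (I : TwoSidedIdeal (FreeAlg d)) (n : ℕ) :
    Submodule ℂ (EuclideanSpace ℂ (Fin n → Fin d)) :=
  (Submodule.span ℂ {v | ∃ p ∈ I, IsHomog n p ∧ v = coefVec n p})ᗮ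

/-- The ideal `I^X` associated with a standard subproduct system `X`: the linear span of the
homogeneous polynomials of some degree `n ≥ 1` whose coefficient vector is orthogonal
to `X(n)`. -/
def IofX {d : ℕ} (X : (n : ℕ) → Submodule ℂ (EuclideanSpace ℂ (Fin n → Fin d))) :
    Submodule ℂ (FreeAlg d) :=
  Submodule.span ℂ {p | ∃ n : ℕ, 1 ≤ n ∧ IsHomog n p ∧ coefVec n p ∈ (X n)ᗮ}

namespace SPS

open FreeMonoid Finsupp

variable {d : ℕ}

/-- The word associated to a function `Fin n → Fin d`. -/
def wd {n : ℕ} (w : Fin n → Fin d) : FreeMonoid (Fin d) := FreeMonoid.ofList (List.ofFn w)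

lemma length_wd {n : ℕ} (w : Fin n → Fin d) : (wd w).length = n :=
  List.length_ofFn

lemma wd_injective {n : ℕ} : Function.Injective (wd (d := d) (n := n)) := by
  intro u v h
  have := congrArg FreeMonoid.toList h
  simpa [wd, List.ofFn_inj] using this

/-- every word of length n is `wd` of something -/
lemma exists_wd {z : FreeMonoid (Fin d)} {n : ℕ} (hz : z.length = n) :
    ∃ w : Fin n → Fin d, wd w = z := by
  subst hz
  exact ⟨fun i => (FreeMonoid.toList z).get ⟨i, i.2⟩, by
    show FreeMonoid.ofList (List.ofFn (List.get (FreeMonoid.toList z))) = z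
    rw [List.ofFn_get, FreeMonoid.ofList_toList]⟩

lemma wd_append {m n : ℕ} (u : Fin m → Fin d) (v : Fin n → Fin d) :
    wd (Fin.append u v) = wd u * wd v := by
  have h1 : (fun i => Fin.append u v (Fin.castLE (Nat.le_add_right m n) i)) = u := by
    funext i; exact Fin.append_left u v i
  have h2 : (fun j => Fin.append u v (Fin.natAdd m j)) = v := by
    funext j; simp [Fin.append_right]
  simp only [wd, List.ofFn_add (f := Fin.append u v), h1, h2, ← FreeMonoid.ofList_append]

lemma coefVec_apply (n : ℕ) (p : FreeAlg d) (w : Fin n → Fin d) :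
    coefVec n p w = p.coeff (wd w) := rfl

lemma coefVec_add (n : ℕ) (p q : FreeAlg d) :
    coefVec n (p + q) = coefVec n p + coefVec n q := by
  ext w; simp [coefVec_apply, coefVec]

lemma coefVec_smul (n : ℕ) (c : ℂ) (p : FreeAlg d) :
    coefVec n (c • p) = c • coefVec n p := by
  ext w; simp [coefVec]

/-- `coefVec` as a linear map -/
def coefVecL (d n : ℕ) : FreeAlg d →ₗ[ℂ] EuclideanSpace ℂ (Fin n → Fin d) where
  toFun := coefVec n
  map_add' := coefVec_add n
  map_smul' := coefVec_smul n

lemma homogComp_apply (n : ℕ) (p : FreeAlg d) (z : FreeMonoid (Fin d)) :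
    (homogComp n p).coeff z = if z.length = n then p.coeff z else 0 := by
  simp [homogComp, Finsupp.filter_apply]

lemma isHomog_homogComp (n : ℕ) (p : FreeAlg d) : IsHomog n (homogComp n p) := by
  intro z hz
  by_contra h
  simp [Finsupp.mem_support_iff, homogComp_apply, h] at hz

lemma homogComp_of_isHomog {n : ℕ} {p : FreeAlg d} (h : IsHomog n p) :
    homogComp n p = p := by
  ext z
  rw [homogComp_apply]
  by_cases hz : z ∈ p.coeff.support
  · rw [if_pos (h z hz)]
  · simp only [Finsupp.notMem_support_iff] at hz
    simp [hz]

lemma homogComp_eq_zero_of_isHomog {n m : ℕ} {p : FreeAlg d} (h : IsHomog m p) (hnm : m ≠ n) :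
    homogComp n p = 0 := by
  ext z
  rw [homogComp_apply]
  by_cases hz : z ∈ p.coeff.support
  · rw [if_neg (by rw [h z hz]; exact hnm)]; rfl
  · simp only [Finsupp.notMem_support_iff] at hz
    simp [hz]

lemma homogComp_add (n : ℕ) (p q : FreeAlg d) :
    homogComp n (p + q) = homogComp n p + homogComp n q := by
  ext z
  rw [MonoidAlgebra.coeff_add, Finsupp.add_apply, homogComp_apply, homogComp_apply, homogComp_apply,
    MonoidAlgebra.coeff_add, Finsupp.add_apply]
  split <;> simp

lemma homogComp_smul (n : ℕ) (c : ℂ) (p : FreeAlg d) :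
    homogComp n (c • p) = c • homogComp n p := by
  ext z
  rw [MonoidAlgebra.coeff_smul, Finsupp.smul_apply, homogComp_apply, homogComp_apply,
    MonoidAlgebra.coeff_smul, Finsupp.smul_apply]
  split <;> simp

/-- decomposition into homogeneous components -/
lemma sum_homogComp (p : FreeAlg d) {N : ℕ} (hN : ∀ z ∈ p.coeff.support, z.length < N) :
    ∑ n ∈ Finset.range N, homogComp n p = p := by
  ext z
  rw [MonoidAlgebra.coeff_sum, Finsupp.finset_sum_apply]
  simp only [homogComp_apply]
  by_cases hz : z ∈ p.coeff.support
  · rw [Finset.sum_ite_eq (Finset.range N) z.length (fun _ => p.coeff z)]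
    rw [if_pos (Finset.mem_range.2 (hN z hz))]
  · simp only [Finsupp.notMem_support_iff] at hz
    simp [hz]

end SPS

namespace SPS
variable {d : ℕ}

/-- the homogeneous polynomial with coefficient vector `v` -/
def polyOfVec (n : ℕ) (v : EuclideanSpace ℂ (Fin n → Fin d)) : FreeAlg d :=
  ∑ w : Fin n → Fin d, MonoidAlgebra.single (wd w) (v w)

lemma polyOfVec_apply_ne {n : ℕ} (v : EuclideanSpace ℂ (Fin n → Fin d))
    {z : FreeMonoid (Fin d)} (h : z.length ≠ n) : (polyOfVec n v).coeff z = 0 := by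
  classical
  rw [polyOfVec, MonoidAlgebra.coeff_sum, Finsupp.finset_sum_apply]
  apply Finset.sum_eq_zero
  intro w _
  rw [MonoidAlgebra.coeff_single, Finsupp.single_apply, if_neg]
  intro hc; exact h (hc ▸ length_wd w)

lemma isHomog_polyOfVec (n : ℕ) (v : EuclideanSpace ℂ (Fin n → Fin d)) :
    IsHomog n (polyOfVec n v) := by
  intro z hz
  by_contra h
  rw [Finsupp.mem_support_iff] at hz
  exact hz (polyOfVec_apply_ne v h)

lemma polyOfVec_wd (n : ℕ) (v : EuclideanSpace ℂ (Fin n → Fin d)) (w : Fin n → Fin d) :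
    (polyOfVec n v).coeff (wd w) = v w := by
  classical
  rw [polyOfVec, MonoidAlgebra.coeff_sum, Finsupp.finset_sum_apply]
  rw [Finset.sum_eq_single w]
  · simp [Finsupp.single_apply]
  · intro u _ hu
    rw [MonoidAlgebra.coeff_single, Finsupp.single_apply, if_neg (fun hc => hu (wd_injective hc))]
  · intro hw; exact absurd (Finset.mem_univ w) hw

lemma coefVec_polyOfVec (n : ℕ) (v : EuclideanSpace ℂ (Fin n → Fin d)) :
    coefVec n (polyOfVec n v) = v := by
  ext w
  rw [coefVec_apply, polyOfVec_wd]

lemma polyOfVec_coefVec {n : ℕ} {p : FreeAlg d} (h : IsHomog n p) :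
    polyOfVec n (coefVec n p) = p := by
  ext z
  by_cases hz : z.length = n
  · obtain ⟨w, rfl⟩ := exists_wd hz
    rw [polyOfVec_wd, coefVec_apply]
  · rw [polyOfVec_apply_ne _ hz]
    by_cases hs : z ∈ p.coeff.support
    · exact absurd (h z hs) hz
    · exact (Finsupp.notMem_support_iff.1 hs).symm

lemma coefVec_injOn {n : ℕ} {p q : FreeAlg d} (hp : IsHomog n p) (hq : IsHomog n q)
    (h : coefVec n p = coefVec n q) : p = q := by
  rw [← polyOfVec_coefVec hp, ← polyOfVec_coefVec hq, h]

/-- homogeneity of a product -/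
lemma isHomog_mul {m n : ℕ} {p q : FreeAlg d} (hp : IsHomog m p) (hq : IsHomog n q) :
    IsHomog (m + n) (p * q) := by
  intro z hz
  classical
  have := MonoidAlgebra.support_coeff_mul_subset p q hz
  rw [Finset.mem_mul] at this
  obtain ⟨a, ha, b, hb, rfl⟩ := this
  rw [FreeMonoid.length_mul, hp a ha, hq b hb]

/-- coefficient vector of a product of homogeneous polynomials -/
lemma coefVec_mul {m n : ℕ} {p q : FreeAlg d} (hp : IsHomog m p) (hq : IsHomog n q) :
    coefVec (m + n) (p * q) = wordMulE (coefVec m p) (coefVec n q) := by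
  classical
  ext w
  set u : Fin m → Fin d := fun i => w (Fin.castAdd n i) with hu
  set v : Fin n → Fin d := fun j => w (Fin.natAdd m j) with hv
  have hw : wd w = wd u * wd v := by
    rw [← wd_append]
    congr 1
    funext k
    refine Fin.addCases (fun i => ?_) (fun j => ?_) k
    · rw [Fin.append_left]
    · rw [Fin.append_right]
  have key : ∀ a ∈ p.coeff.support, ∀ b ∈ q.coeff.support,
      (a * b = wd w) → (a = wd u ∧ b = wd v) := by
    intro a ha b hb hab
    rw [hw] at hab
    have h1 : FreeMonoid.toList a ++ FreeMonoid.toList b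
        = FreeMonoid.toList (wd u) ++ FreeMonoid.toList (wd v) := by
      rw [← FreeMonoid.toList_mul, ← FreeMonoid.toList_mul, hab]
    have h2 : (FreeMonoid.toList a).length = (FreeMonoid.toList (wd u)).length := by
      show a.length = (wd u).length
      rw [hp a ha, length_wd]
    obtain ⟨e1, e2⟩ := List.append_inj h1 h2
    have tinj : Function.Injective (FreeMonoid.toList (α := Fin d)) := fun x y hxy => by
      rw [← FreeMonoid.ofList_toList x, ← FreeMonoid.ofList_toList y, hxy]
    exact ⟨tinj e1, tinj e2⟩
  show (p * q).coeff (wd w) = p.coeff (wd u) * q.coeff (wd v)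
  rw [MonoidAlgebra.coeff_mul]
  simp only [Finsupp.sum]
  by_cases hu' : wd u ∈ p.coeff.support
  · by_cases hv' : wd v ∈ q.coeff.support
    · rw [Finset.sum_eq_single_of_mem (wd u) hu', Finset.sum_eq_single_of_mem (wd v) hv',
        if_pos hw.symm]
      · intro b hb hbne
        rw [if_neg (fun hc => hbne (key _ hu' _ hb hc).2)]
      · intro a ha hane
        apply Finset.sum_eq_zero
        intro b hb
        rw [if_neg (fun hc => hane (key _ ha _ hb hc).1)]
    · rw [Finsupp.notMem_support_iff.1 hv', mul_zero]
      apply Finset.sum_eq_zero; intro a ha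
      apply Finset.sum_eq_zero; intro b hb
      rw [if_neg (fun hc => hv' ((key _ ha _ hb hc).2 ▸ hb))]
  · rw [Finsupp.notMem_support_iff.1 hu', zero_mul]
    apply Finset.sum_eq_zero; intro a ha
    apply Finset.sum_eq_zero; intro b hb
    rw [if_neg (fun hc => hu' ((key _ ha _ hb hc).1 ▸ ha))]

end SPS

namespace SPS
open scoped InnerProductSpace ComplexConjugate
variable {d : ℕ}

local notation "V" n => EuclideanSpace ℂ (Fin n → Fin d)

lemma append_split {m n : ℕ} (w : Fin (m + n) → Fin d) :
    Fin.append (fun i => w (Fin.castAdd n i)) (fun j => w (Fin.natAdd m j)) = w := by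
  funext k
  refine Fin.addCases (fun i => ?_) (fun j => ?_) k
  · rw [Fin.append_left]
  · rw [Fin.append_right]

/-- splitting a sum over words of length `m+n` -/
lemma sum_split {m n : ℕ} {M : Type*} [AddCommMonoid M] (g : (Fin (m + n) → Fin d) → M) :
    ∑ w : Fin (m + n) → Fin d, g w
      = ∑ u : Fin m → Fin d, ∑ v : Fin n → Fin d, g (Fin.append u v) := by
  have hbij : Function.Bijective
      (fun p : ((Fin m → Fin d) × (Fin n → Fin d)) => Fin.append p.1 p.2) := by
    constructor
    · intro p q hpq
      have h1 : p.1 = q.1 := by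
        funext i
        have := congrFun hpq (Fin.castAdd n i)
        simpa [Fin.append_left] using this
      have h2 : p.2 = q.2 := by
        funext j
        have := congrFun hpq (Fin.natAdd m j)
        simpa [Fin.append_right] using this
      exact Prod.ext h1 h2
    · intro w
      exact ⟨(fun i => w (Fin.castAdd n i), fun j => w (Fin.natAdd m j)), append_split w⟩
  have h1 : ∑ p : (Fin m → Fin d) × (Fin n → Fin d), g (Fin.append p.1 p.2)
      = ∑ w : Fin (m + n) → Fin d, g w :=
    Fintype.sum_bijective _ hbij (fun p => g (Fin.append p.1 p.2)) g (fun _ => rfl)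
  rw [← h1, Fintype.sum_prod_type]

lemma wordMulE_append {m n : ℕ} (a : V m) (b : V n) (u : Fin m → Fin d) (v : Fin n → Fin d) :
    wordMulE a b (Fin.append u v) = a u * b v := by
  show a (fun i => Fin.append u v (Fin.castAdd n i)) * b (fun j => Fin.append u v (Fin.natAdd m j))
      = a u * b v
  congr 1
  · exact congrArg (fun x => a x) (funext fun i => Fin.append_left u v i)
  · exact congrArg (fun x => b x) (funext fun j => Fin.append_right u v j)

lemma inner_wordMulE {m n : ℕ} (a c : V m) (b e : V n) :
    (inner ℂ (wordMulE a b) (wordMulE c e) : ℂ) = inner ℂ a c * inner ℂ b e := by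
  simp only [PiLp.inner_apply, RCLike.inner_apply']
  rw [sum_split (fun w => conj (wordMulE a b w) * wordMulE c e w), Finset.sum_mul_sum]
  apply Finset.sum_congr rfl; intro u _
  apply Finset.sum_congr rfl; intro v _
  rw [wordMulE_append, wordMulE_append, map_mul]
  ring

lemma wordMulE_add_right {m n : ℕ} (a : V m) (b b' : V n) :
    wordMulE a (b + b') = wordMulE a b + wordMulE a b' := by
  ext w
  show a _ * (b _ + b' _) = a _ * b _ + a _ * b' _
  rw [mul_add]

lemma wordMulE_smul_right {m n : ℕ} (a : V m) (c : ℂ) (b : V n) :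
    wordMulE a (c • b) = c • wordMulE a b := by
  ext w
  show a _ * (c * b _) = c * (a _ * b _)
  ring

lemma mem_orthogonal_span {E : Type*} [NormedAddCommGroup E] [InnerProductSpace ℂ E]
    {T : Set E} {y : E} (h : ∀ u ∈ T, (inner ℂ u y : ℂ) = 0) :
    y ∈ (Submodule.span ℂ T)ᗮ := by
  rw [Submodule.mem_orthogonal]
  intro u hu
  induction hu using Submodule.span_induction with
  | mem x hx => exact h x hx
  | zero => exact inner_zero_left y
  | add x z _ _ hx hz => rw [inner_add_left, hx, hz, add_zero]
  | smul c x _ hx => rw [inner_smul_left, hx, mul_zero]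

/-- the key tensor-orthogonality lemma -/
lemma tensor_orth {m n : ℕ} (A : Submodule ℂ (V m)) (B : Submodule ℂ (V n))
    (x : EuclideanSpace ℂ (Fin (m + n) → Fin d))
    (h1 : ∀ a ∈ A, ∀ v : EuclideanSpace ℂ (Fin n → Fin d), (inner ℂ (wordMulE a v) x : ℂ) = 0)
    (h2 : ∀ u : EuclideanSpace ℂ (Fin m → Fin d), ∀ b ∈ B, (inner ℂ (wordMulE u b) x : ℂ) = 0) :
    x ∈ prodSpanE Aᗮ Bᗮ := by
  classical
  set sl : (Fin n → Fin d) → EuclideanSpace ℂ (Fin m → Fin d) :=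
    fun v => WithLp.toLp 2 (fun u => x (Fin.append u v)) with hsl
  have hslA : ∀ v, sl v ∈ Aᗮ := by
    intro v
    rw [Submodule.mem_orthogonal]
    intro a ha
    have h0 := h1 a ha (EuclideanSpace.single v 1)
    rw [PiLp.inner_apply] at h0
    rw [sum_split (fun w => (inner ℂ (wordMulE a (EuclideanSpace.single v 1) w) (x w) : ℂ))] at h0
    simp only [wordMulE_append, RCLike.inner_apply', map_mul] at h0
    rw [PiLp.inner_apply]
    simp only [RCLike.inner_apply']
    rw [← h0, Finset.sum_comm, Finset.sum_eq_single_of_mem v (Finset.mem_univ v)]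
    · apply Finset.sum_congr rfl
      intro u _
      simp [EuclideanSpace.single_apply, hsl]
    · intro v' _ hne
      apply Finset.sum_eq_zero
      intro u _
      simp [EuclideanSpace.single_apply, hne]
  set b := stdOrthonormalBasis ℂ (↥(Aᗮ)) with hb
  set z : Fin (Module.finrank ℂ ↥(Aᗮ)) → EuclideanSpace ℂ (Fin n → Fin d) :=
    fun i => WithLp.toLp 2 fun v => (inner ℂ ((b i : EuclideanSpace ℂ (Fin m → Fin d))) (sl v) : ℂ) with hz
  have hzB : ∀ i, z i ∈ Bᗮ := by
    intro i
    rw [Submodule.mem_orthogonal]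
    intro bb hbb
    have h0 := h2 (b i : EuclideanSpace ℂ (Fin m → Fin d)) bb hbb
    rw [PiLp.inner_apply] at h0
    rw [sum_split (fun w =>
      (inner ℂ (wordMulE (b i : EuclideanSpace ℂ (Fin m → Fin d)) bb w) (x w) : ℂ))] at h0
    simp only [wordMulE_append, RCLike.inner_apply', map_mul] at h0
    rw [PiLp.inner_apply]
    simp only [RCLike.inner_apply', hz, PiLp.inner_apply]
    rw [← h0, Finset.sum_comm]
    apply Finset.sum_congr rfl; intro v _
    rw [Finset.mul_sum]
    apply Finset.sum_congr rfl; intro u _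
    simp only [hsl]
    ring
  have hx : x = ∑ i, wordMulE (b i : EuclideanSpace ℂ (Fin m → Fin d)) (z i) := by
    ext w
    have hexp : sl (fun j => w (Fin.natAdd m j))
        = ∑ i, (inner ℂ ((b i : EuclideanSpace ℂ (Fin m → Fin d)))
            (sl (fun j => w (Fin.natAdd m j))) : ℂ)
          • (b i : EuclideanSpace ℂ (Fin m → Fin d)) := by
      have h0 := congrArg (fun y : ↥(Aᗮ) => (y : EuclideanSpace ℂ (Fin m → Fin d)))
        (b.sum_repr' (⟨sl (fun j => w (Fin.natAdd m j)), hslA _⟩ : ↥(Aᗮ)))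
      simpa using h0.symm
    have hlhs : x w = sl (fun j => w (Fin.natAdd m j)) (fun i => w (Fin.castAdd n i)) := by
      simp only [hsl]
      rw [append_split]
    rw [hlhs, hexp]
    rw [WithLp.ofLp_sum, WithLp.ofLp_sum, Finset.sum_apply, Finset.sum_apply]
    apply Finset.sum_congr rfl
    intro i _
    show (inner ℂ ((b i : EuclideanSpace ℂ (Fin m → Fin d)))
            (sl (fun j => w (Fin.natAdd m j))) : ℂ)
          * (b i : EuclideanSpace ℂ (Fin m → Fin d)) (fun i => w (Fin.castAdd n i))
        = (b i : EuclideanSpace ℂ (Fin m → Fin d)) (fun i => w (Fin.castAdd n i))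
          * z i (fun j => w (Fin.natAdd m j))
    rw [hz]
    ring
  rw [hx]
  apply Submodule.sum_mem
  intro i _
  apply Submodule.subset_span
  exact ⟨(b i : EuclideanSpace ℂ (Fin m → Fin d)), (b i).2, z i, hzB i, rfl⟩

end SPS

namespace SPS
open scoped InnerProductSpace ComplexConjugate
variable {d : ℕ}

lemma smul_mem_tsi (I : TwoSidedIdeal (FreeAlg d)) (c : ℂ) {p : FreeAlg d} (hp : p ∈ I) :
    c • p ∈ I := by
  have : c • p = (algebraMap ℂ (FreeAlg d) c) * p := (Algebra.smul_def c p).symm ▸ rfl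
  rw [Algebra.smul_def c p]
  exact I.mul_mem_left _ _ hp

/-- The degree-`n` homogeneous part of an ideal, as a submodule. -/
def idealHomog (I : TwoSidedIdeal (FreeAlg d)) (n : ℕ) : Submodule ℂ (FreeAlg d) where
  carrier := {p | p ∈ I ∧ IsHomog n p}
  add_mem' := by
    classical
    rintro p q ⟨hp, hp'⟩ ⟨hq, hq'⟩
    refine ⟨I.add_mem hp hq, fun z hz => ?_⟩
    rcases Finset.mem_union.1 (Finsupp.support_add hz) with h | h
    · exact hp' z h
    · exact hq' z h
  zero_mem' := ⟨I.zero_mem, fun z hz => by simp at hz⟩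
  smul_mem' := by
    rintro c p ⟨hp, hp'⟩
    refine ⟨smul_mem_tsi I c hp, fun z hz => ?_⟩
    exact hp' z (Finsupp.support_smul hz)

/-- coefficient vectors of the degree-`n` part of an ideal -/
def Ehat (I : TwoSidedIdeal (FreeAlg d)) (n : ℕ) :
    Submodule ℂ (EuclideanSpace ℂ (Fin n → Fin d)) :=
  Submodule.map (coefVecL d n) (idealHomog I n)

lemma span_set_eq_Ehat (I : TwoSidedIdeal (FreeAlg d)) (n : ℕ) :
    Submodule.span ℂ {v | ∃ p ∈ I, IsHomog n p ∧ v = coefVec n p} = Ehat I n := by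
  have hset : {v | ∃ p ∈ I, IsHomog n p ∧ v = coefVec n p} = ↑(Ehat I n) := by
    ext v
    constructor
    · rintro ⟨p, hp, hh, rfl⟩
      exact ⟨p, ⟨hp, hh⟩, rfl⟩
    · rintro ⟨p, ⟨hp, hh⟩, rfl⟩
      exact ⟨p, hp, hh, rfl⟩
  rw [hset, Submodule.span_eq]

lemma XofI_eq (I : TwoSidedIdeal (FreeAlg d)) (n : ℕ) : XofI I n = (Ehat I n)ᗮ := by
  rw [XofI, span_set_eq_Ehat]

/-- a degree-0 homogeneous polynomial is a scalar -/
lemma isHomog_zero_eq {p : FreeAlg d} (h : IsHomog 0 p) :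
    p = (p.coeff 1) • (1 : FreeAlg d) := by
  classical
  ext z
  by_cases hz : z = 1
  · subst hz
    rw [MonoidAlgebra.coeff_smul, Finsupp.smul_apply]
    show p.coeff 1 = _ • (MonoidAlgebra.single 1 1 : FreeAlg d).coeff 1
    rw [MonoidAlgebra.coeff_single, Finsupp.single_apply, if_pos rfl, smul_eq_mul, mul_one]
  · have h0 : p.coeff z = 0 := by
      by_contra hne
      have hz' : z ∈ p.coeff.support := Finsupp.mem_support_iff.2 hne
      have := h z hz'
      rw [FreeMonoid.length_eq_zero] at this
      exact hz this
    rw [h0, MonoidAlgebra.coeff_smul, Finsupp.smul_apply]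
    show (0:ℂ) = _ • (MonoidAlgebra.single 1 1 : FreeAlg d).coeff z
    rw [MonoidAlgebra.coeff_single, Finsupp.single_apply, if_neg (fun hc => hz hc.symm), smul_zero]

/-- in a proper ideal, degree-0 homogeneous elements vanish -/
lemma homog_zero_of_proper {I : TwoSidedIdeal (FreeAlg d)} (hI : (1 : FreeAlg d) ∉ I)
    {p : FreeAlg d} (hp : p ∈ I) (h : IsHomog 0 p) : p = 0 := by
  by_contra hne
  have hc : p.coeff 1 ≠ 0 := by
    intro h0
    exact hne (by rw [isHomog_zero_eq h, h0, zero_smul])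
  have he := isHomog_zero_eq h
  have h1 : (p.coeff 1)⁻¹ • p = 1 := by
    calc (p.coeff 1)⁻¹ • p = (p.coeff 1)⁻¹ • ((p.coeff 1) • (1 : FreeAlg d)) := by rw [← he]
    _ = 1 := by rw [smul_smul, inv_mul_cancel₀ hc, one_smul]
  exact hI (h1 ▸ smul_mem_tsi I _ hp)

end SPS

namespace SPS
open scoped InnerProductSpace ComplexConjugate
variable {d : ℕ}

lemma isHomog_single {n : ℕ} (t : Fin n → Fin d) (c : ℂ) :
    IsHomog n ((MonoidAlgebra.single (wd t) c : FreeAlg d)) := by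
  intro z hz
  have := Finsupp.support_single_subset hz
  rw [Finset.mem_singleton] at this
  subst this
  exact length_wd t

lemma coefVec_single {n : ℕ} (t : Fin n → Fin d) :
    coefVec n (MonoidAlgebra.single (wd t) 1 : FreeAlg d) = EuclideanSpace.single t (1 : ℂ) := by
  classical
  ext s
  rw [coefVec_apply, MonoidAlgebra.coeff_single, Finsupp.single_apply, EuclideanSpace.single_apply]
  by_cases h : s = t
  · subst h; rw [if_pos rfl, if_pos rfl]
  · rw [if_neg (fun hc => h (wd_injective hc).symm), if_neg h]

lemma euclid_decomp {n : ℕ} (v : EuclideanSpace ℂ (Fin n → Fin d)) :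
    v = ∑ t : Fin n → Fin d, v t • EuclideanSpace.single t (1 : ℂ) := by
  classical
  ext s
  rw [WithLp.ofLp_sum, Finset.sum_apply]
  show v s = ∑ t : Fin n → Fin d, v t * (EuclideanSpace.single t (1:ℂ)) s
  simp only [EuclideanSpace.single_apply]
  rw [Finset.sum_congr rfl (fun t _ => by rw [mul_ite, mul_one, mul_zero])]
  rw [Finset.sum_ite_eq Finset.univ s v, if_pos (Finset.mem_univ s)]

lemma wordMulE_sum_right {m n : ℕ} {T : Type*} (a : EuclideanSpace ℂ (Fin m → Fin d))
    (s : Finset T) (f : T → EuclideanSpace ℂ (Fin n → Fin d)) :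
    wordMulE a (∑ t ∈ s, f t) = ∑ t ∈ s, wordMulE a (f t) := by
  ext w
  rw [WithLp.ofLp_sum, Finset.sum_apply]
  show a _ * (∑ t ∈ s, f t) _ = _
  rw [WithLp.ofLp_sum, Finset.sum_apply, Finset.mul_sum]
  rfl

lemma wordMulE_sum_left {m n : ℕ} {T : Type*} (b : EuclideanSpace ℂ (Fin n → Fin d))
    (s : Finset T) (f : T → EuclideanSpace ℂ (Fin m → Fin d)) :
    wordMulE (∑ t ∈ s, f t) b = ∑ t ∈ s, wordMulE (f t) b := by
  ext w
  rw [WithLp.ofLp_sum, Finset.sum_apply]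
  show (∑ t ∈ s, f t) _ * b _ = _
  rw [WithLp.ofLp_sum, Finset.sum_apply, Finset.sum_mul]
  rfl

lemma wordMulE_smul_left {m n : ℕ} (c : ℂ) (a : EuclideanSpace ℂ (Fin m → Fin d))
    (b : EuclideanSpace ℂ (Fin n → Fin d)) :
    wordMulE (c • a) b = c • wordMulE a b := by
  ext w
  show (c * a _) * b _ = c * (a _ * b _)
  ring

lemma mem_Ehat_mul_right {I : TwoSidedIdeal (FreeAlg d)} {m n : ℕ} {p : FreeAlg d}
    (hp : p ∈ I) (hh : IsHomog m p) (t : Fin n → Fin d) :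
    wordMulE (coefVec m p) (EuclideanSpace.single t (1:ℂ)) ∈ Ehat I (m + n) :=
  ⟨p * MonoidAlgebra.single (wd t) 1,
    ⟨I.mul_mem_right _ _ hp, isHomog_mul hh (isHomog_single t 1)⟩,
    by show coefVec (m+n) _ = _
       rw [coefVec_mul hh (isHomog_single t 1), coefVec_single]⟩

lemma mem_Ehat_mul_left {I : TwoSidedIdeal (FreeAlg d)} {m n : ℕ} {p : FreeAlg d}
    (hp : p ∈ I) (hh : IsHomog n p) (t : Fin m → Fin d) :
    wordMulE (EuclideanSpace.single t (1:ℂ)) (coefVec n p) ∈ Ehat I (m + n) :=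
  ⟨MonoidAlgebra.single (wd t) 1 * p,
    ⟨I.mul_mem_left _ _ hp, isHomog_mul (isHomog_single t 1) hh⟩,
    by show coefVec (m+n) _ = _
       rw [coefVec_mul (isHomog_single t 1) hh, coefVec_single]⟩

lemma XofI_zero (I : TwoSidedIdeal (FreeAlg d)) (hI : (1 : FreeAlg d) ∉ I) :
    XofI I 0 = ⊤ := by
  rw [XofI_eq]
  have : Ehat I 0 = ⊥ := by
    rw [Submodule.eq_bot_iff]
    rintro v ⟨p, ⟨hp, hh⟩, rfl⟩
    show coefVec 0 p = 0
    rw [homog_zero_of_proper hI hp hh]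
    ext w
    rfl
  rw [this, Submodule.bot_orthogonal_eq_top]

lemma XofI_mul (I : TwoSidedIdeal (FreeAlg d)) (m n : ℕ) :
    XofI I (m + n) ≤ prodSpanE (XofI I m) (XofI I n) := by
  intro x hx
  rw [XofI_eq, Submodule.mem_orthogonal] at hx
  rw [XofI_eq I m, XofI_eq I n]
  apply tensor_orth
  · rintro a ⟨p, ⟨hpI, hph⟩, rfl⟩ v
    show (inner ℂ (wordMulE (coefVec m p) v) x : ℂ) = 0
    rw [euclid_decomp v, wordMulE_sum_right, sum_inner]
    apply Finset.sum_eq_zero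
    intro t _
    rw [wordMulE_smul_right, inner_smul_left, hx _ (mem_Ehat_mul_right hpI hph t), mul_zero]
  · rintro u b ⟨p, ⟨hpI, hph⟩, rfl⟩
    show (inner ℂ (wordMulE u (coefVec n p)) x : ℂ) = 0
    rw [euclid_decomp u, wordMulE_sum_left, sum_inner]
    apply Finset.sum_eq_zero
    intro t _
    rw [wordMulE_smul_left, inner_smul_left, hx _ (mem_Ehat_mul_left hpI hph t), mul_zero]

end SPS

namespace SPS
open scoped InnerProductSpace ComplexConjugate
variable {d : ℕ}

lemma orth_orth {n : ℕ} (K : Submodule ℂ (EuclideanSpace ℂ (Fin n → Fin d))) : Kᗮᗮ = K :=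
  K.orthogonal_orthogonal

lemma exists_degree_bound (p : FreeAlg d) : ∃ N : ℕ, ∀ z ∈ p.coeff.support, z.length < N := by
  refine ⟨p.coeff.support.sup (fun z => z.length) + 1, fun z hz => ?_⟩
  exact Nat.lt_succ_of_le (Finset.le_sup hz)

lemma wordMulE_mem_orth_left {m n : ℕ}
    {X : (k : ℕ) → Submodule ℂ (EuclideanSpace ℂ (Fin k → Fin d))}
    (hX : X (m + n) ≤ prodSpanE (X m) (X n))
    {a : EuclideanSpace ℂ (Fin m → Fin d)} (ha : a ∈ (X m)ᗮ)
    (v : EuclideanSpace ℂ (Fin n → Fin d)) : wordMulE a v ∈ (X (m + n))ᗮ := by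
  apply Submodule.orthogonal_le hX
  apply mem_orthogonal_span
  rintro u ⟨c, hc, e, he, rfl⟩
  rw [inner_wordMulE, (Submodule.mem_orthogonal _ _).1 ha c hc, zero_mul]

lemma wordMulE_mem_orth_right {m n : ℕ}
    {X : (k : ℕ) → Submodule ℂ (EuclideanSpace ℂ (Fin k → Fin d))}
    (hX : X (m + n) ≤ prodSpanE (X m) (X n))
    (u : EuclideanSpace ℂ (Fin m → Fin d))
    {b : EuclideanSpace ℂ (Fin n → Fin d)} (hb : b ∈ (X n)ᗮ) :
    wordMulE u b ∈ (X (m + n))ᗮ := by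
  apply Submodule.orthogonal_le hX
  apply mem_orthogonal_span
  rintro s ⟨c, hc, e, he, rfl⟩
  rw [inner_wordMulE, (Submodule.mem_orthogonal _ _).1 hb e he, mul_zero]

section IofX
variable {X : (k : ℕ) → Submodule ℂ (EuclideanSpace ℂ (Fin k → Fin d))}

/-- generating set of `IofX` -/
def genSet (X : (k : ℕ) → Submodule ℂ (EuclideanSpace ℂ (Fin k → Fin d))) : Set (FreeAlg d) :=
  {p | ∃ n : ℕ, 1 ≤ n ∧ IsHomog n p ∧ coefVec n p ∈ (X n)ᗮ}

lemma IofX_eq_span : IofX X = Submodule.span ℂ (genSet X) := rfl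

lemma mul_mem_IofX (hX : ∀ m n : ℕ, X (m + n) ≤ prodSpanE (X m) (X n)) :
    ∀ p ∈ IofX X, ∀ r : FreeAlg d, p * r ∈ IofX X ∧ r * p ∈ IofX X := by
  have hgen : ∀ p ∈ genSet X, ∀ r : FreeAlg d, p * r ∈ IofX X ∧ r * p ∈ IofX X := by
    rintro p ⟨n, hn, hph, hpo⟩ r
    obtain ⟨N, hN⟩ := exists_degree_bound r
    constructor
    · rw [← sum_homogComp r hN, Finset.mul_sum]
      apply Submodule.sum_mem
      intro k _
      apply Submodule.subset_span
      refine ⟨n + k, le_trans hn (Nat.le_add_right n k), isHomog_mul hph (isHomog_homogComp k r), ?_⟩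
      rw [coefVec_mul hph (isHomog_homogComp k r)]
      exact wordMulE_mem_orth_left (hX n k) hpo _
    · rw [← sum_homogComp r hN, Finset.sum_mul]
      apply Submodule.sum_mem
      intro k _
      apply Submodule.subset_span
      refine ⟨k + n, le_trans hn (Nat.le_add_left n k), isHomog_mul (isHomog_homogComp k r) hph, ?_⟩
      rw [coefVec_mul (isHomog_homogComp k r) hph]
      exact wordMulE_mem_orth_right (hX k n) _ hpo
  intro p hp
  induction hp using Submodule.span_induction with
  | mem q hq => exact hgen q hq
  | zero => intro r; rw [zero_mul, mul_zero]; exact ⟨Submodule.zero_mem _, Submodule.zero_mem _⟩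
  | add q s _ _ hq hs =>
    intro r
    rw [add_mul, mul_add]
    exact ⟨Submodule.add_mem _ (hq r).1 (hs r).1, Submodule.add_mem _ (hq r).2 (hs r).2⟩
  | smul c q _ hq =>
    intro r
    rw [smul_mul_assoc, mul_smul_comm]
    exact ⟨Submodule.smul_mem _ c (hq r).1, Submodule.smul_mem _ c (hq r).2⟩

/-- `IofX X` as a two-sided ideal -/
def JofX (X : (k : ℕ) → Submodule ℂ (EuclideanSpace ℂ (Fin k → Fin d)))
    (hX : ∀ m n : ℕ, X (m + n) ≤ prodSpanE (X m) (X n)) : TwoSidedIdeal (FreeAlg d) :=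
  TwoSidedIdeal.mk' (IofX X : Set (FreeAlg d))
    (Submodule.zero_mem _)
    (fun ha hb => Submodule.add_mem _ ha hb)
    (fun ha => Submodule.neg_mem _ ha)
    (fun {x y} hy => (mul_mem_IofX hX y hy x).2)
    (fun {x y} hx => (mul_mem_IofX hX x hx y).1)

lemma mem_JofX (hX : ∀ m n : ℕ, X (m + n) ≤ prodSpanE (X m) (X n)) (p : FreeAlg d) :
    p ∈ JofX X hX ↔ p ∈ IofX X :=
  TwoSidedIdeal.mem_mk' _ _ _ _ _ _ p

lemma homogComp_mem_IofX (k : ℕ) : ∀ q ∈ IofX X, homogComp k q ∈ IofX X := by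
  intro q hq
  induction hq using Submodule.span_induction with
  | mem g hg =>
    obtain ⟨ng, hn1, hgh, hgo⟩ := hg
    by_cases h : ng = k
    · subst h
      rw [homogComp_of_isHomog hgh]
      exact Submodule.subset_span ⟨ng, hn1, hgh, hgo⟩
    · rw [homogComp_eq_zero_of_isHomog hgh h]
      exact Submodule.zero_mem _
  | zero =>
    rw [show homogComp k (0 : FreeAlg d) = 0 from by ext z; rw [homogComp_apply]; split <;> rfl]
    exact Submodule.zero_mem _
  | add q s _ _ hq hs => rw [homogComp_add]; exact Submodule.add_mem _ hq hs
  | smul c q _ hq => rw [homogComp_smul]; exact Submodule.smul_mem _ c hq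

lemma isHomog_one : IsHomog 0 (1 : FreeAlg d) := by
  intro z hz
  have := Finsupp.support_single_subset hz
  rw [Finset.mem_singleton] at this
  subst this
  rfl

lemma homogComp_zero_IofX : ∀ q ∈ IofX X, homogComp 0 q = 0 := by
  intro q hq
  induction hq using Submodule.span_induction with
  | mem g hg =>
    obtain ⟨ng, hn1, hgh, _⟩ := hg
    exact homogComp_eq_zero_of_isHomog hgh (by omega)
  | zero => ext z; rw [homogComp_apply]; split <;> rfl
  | add q s _ _ hq hs => rw [homogComp_add, hq, hs, add_zero]
  | smul c q _ hq => rw [homogComp_smul, hq, smul_zero]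

lemma one_not_mem_IofX : (1 : FreeAlg d) ∉ IofX X := by
  intro h
  have h0 := homogComp_zero_IofX 1 h
  rw [homogComp_of_isHomog isHomog_one] at h0
  exact one_ne_zero h0

lemma coef_homogComp_mem_orth (n : ℕ) : ∀ q ∈ IofX X,
    coefVec n (homogComp n q) ∈ (X n)ᗮ := by
  intro q hq
  induction hq using Submodule.span_induction with
  | mem g hg =>
    obtain ⟨ng, hn1, hgh, hgo⟩ := hg
    by_cases h : ng = n
    · subst h
      rw [homogComp_of_isHomog hgh]
      exact hgo
    · rw [homogComp_eq_zero_of_isHomog hgh h]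
      rw [show coefVec n (0 : FreeAlg d) = 0 from rfl]
      exact Submodule.zero_mem _
  | zero =>
    rw [show homogComp n (0 : FreeAlg d) = 0 from by ext z; rw [homogComp_apply]; split <;> rfl]
    exact Submodule.zero_mem _
  | add q s _ _ hq hs =>
    rw [homogComp_add, coefVec_add]
    exact Submodule.add_mem _ hq hs
  | smul c q _ hq =>
    rw [homogComp_smul, coefVec_smul]
    exact Submodule.smul_mem _ c hq

lemma Ehat_JofX (hX : ∀ m n : ℕ, X (m + n) ≤ prodSpanE (X m) (X n))
    {n : ℕ} (hn : 1 ≤ n) : Ehat (JofX X hX) n = (X n)ᗮ := by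
  apply le_antisymm
  · rintro v ⟨p, ⟨hpJ, hph⟩, rfl⟩
    rw [mem_JofX] at hpJ
    have := coef_homogComp_mem_orth n p hpJ
    rw [homogComp_of_isHomog hph] at this
    exact this
  · intro v hv
    refine ⟨polyOfVec n v, ⟨?_, isHomog_polyOfVec n v⟩, coefVec_polyOfVec n v⟩
    rw [mem_JofX]
    apply Submodule.subset_span
    exact ⟨n, hn, isHomog_polyOfVec n v, by rw [coefVec_polyOfVec]; exact hv⟩

lemma XofI_JofX (hX0 : X 0 = ⊤) (hX : ∀ m n : ℕ, X (m + n) ≤ prodSpanE (X m) (X n)) (n : ℕ) :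
    XofI (JofX X hX) n = X n := by
  rcases Nat.eq_zero_or_pos n with rfl | hn
  · rw [XofI_eq, hX0]
    have : Ehat (JofX X hX) 0 = ⊥ := by
      rw [Submodule.eq_bot_iff]
      rintro v ⟨p, ⟨hpJ, hph⟩, rfl⟩
      rw [mem_JofX] at hpJ
      have h0 := homogComp_zero_IofX p hpJ
      rw [homogComp_of_isHomog hph] at h0
      subst h0
      rfl
    rw [this, Submodule.bot_orthogonal_eq_top]
  · rw [XofI_eq, Ehat_JofX hX hn, orth_orth]

end IofX
end SPS

namespace SPS
variable {d : ℕ}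

lemma XofI_orth (I : TwoSidedIdeal (FreeAlg d)) (n : ℕ) : (XofI I n)ᗮ = Ehat I n := by
  rw [XofI_eq, orth_orth]

lemma IofX_XofI_sub (I : TwoSidedIdeal (FreeAlg d)) :
    ∀ p ∈ IofX (XofI I), p ∈ I := by
  intro p hp
  induction hp using Submodule.span_induction with
  | mem g hg =>
    obtain ⟨n, _, hgh, hgo⟩ := hg
    rw [XofI_orth] at hgo
    obtain ⟨q, ⟨hqI, hqh⟩, heq⟩ := hgo
    rwa [coefVec_injOn hgh hqh (heq.symm : coefVec n g = coefVec n q)]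
  | zero => exact I.zero_mem
  | add q s _ _ hq hs => exact I.add_mem hq hs
  | smul c q _ hq => exact smul_mem_tsi I c hq

lemma coefVec_homogComp_mem_Ehat (I : TwoSidedIdeal (FreeAlg d)) (hI : IsHomogIdeal I)
    {p : FreeAlg d} (hp : p ∈ I) (k : ℕ) :
    coefVec k (homogComp k p) ∈ Ehat I k :=
  ⟨homogComp k p, ⟨hI p hp k, isHomog_homogComp k p⟩, rfl⟩

lemma sub_IofX_XofI (I : TwoSidedIdeal (FreeAlg d)) (hI : IsHomogIdeal I)
    (hprop : (1 : FreeAlg d) ∉ I) : ∀ p ∈ I, p ∈ IofX (XofI I) := by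
  intro p hp
  obtain ⟨N, hN⟩ := exists_degree_bound p
  rw [← sum_homogComp p hN]
  apply Submodule.sum_mem
  intro k _
  rcases Nat.eq_zero_or_pos k with rfl | hk
  · rw [homog_zero_of_proper hprop (hI p hp 0) (isHomog_homogComp 0 p)]
    exact Submodule.zero_mem _
  · apply Submodule.subset_span
    refine ⟨k, hk, isHomog_homogComp k p, ?_⟩
    rw [XofI_eq, orth_orth]
    exact coefVec_homogComp_mem_Ehat I hI hp k

lemma Ehat_mono {I J : TwoSidedIdeal (FreeAlg d)} (h : ∀ p : FreeAlg d, p ∈ I → p ∈ J)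
    (n : ℕ) : Ehat I n ≤ Ehat J n := by
  rintro v ⟨p, ⟨hpI, hph⟩, rfl⟩
  exact ⟨p, ⟨h p hpI, hph⟩, rfl⟩

lemma incl_of_Ehat_le {I J : TwoSidedIdeal (FreeAlg d)} (hI : IsHomogIdeal I)
    (h : ∀ n : ℕ, Ehat I n ≤ Ehat J n) : ∀ p : FreeAlg d, p ∈ I → p ∈ J := by
  intro p hp
  obtain ⟨N, hN⟩ := exists_degree_bound p
  rw [← sum_homogComp p hN]
  apply TwoSidedIdeal.finsetSum_mem
  intro k _
  have hmem := h k (coefVec_homogComp_mem_Ehat I hI hp k)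
  obtain ⟨q, ⟨hqJ, hqh⟩, heq⟩ := hmem
  rwa [coefVec_injOn (isHomog_homogComp k p) hqh
    (heq.symm : coefVec k (homogComp k p) = coefVec k q)]

end SPS


/-- **The inclusion-reversing bijection between proper homogeneous two-sided ideals of
`ℂ⟨x₁,…,x_d⟩` and standard subproduct systems over `ℂ^d`**: `I ↦ X_I` and `X ↦ I^X` are
mutually inverse, `I^X` is a proper homogeneous two-sided ideal, and `I ⊆ J` iff
`X_J(n) ⊆ X_I(n)` for all `n`. -/
theorem stmt8 (d : ℕ) (hd : 1 ≤ d) :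
    (∀ I : TwoSidedIdeal (FreeAlg d), IsHomogIdeal I → (1 : FreeAlg d) ∉ I →
      (XofI I 0 = ⊤ ∧ ∀ m n : ℕ, XofI I (m + n) ≤ prodSpanE (XofI I m) (XofI I n))) ∧
    (∀ X : (n : ℕ) → Submodule ℂ (EuclideanSpace ℂ (Fin n → Fin d)),
      X 0 = ⊤ → (∀ m n : ℕ, X (m + n) ≤ prodSpanE (X m) (X n)) →
      ∃ J : TwoSidedIdeal (FreeAlg d),
        (∀ p : FreeAlg d, p ∈ J ↔ p ∈ IofX X) ∧ IsHomogIdeal J ∧ (1 : FreeAlg d) ∉ J ∧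
        ∀ n : ℕ, XofI J n = X n) ∧
    (∀ I : TwoSidedIdeal (FreeAlg d), IsHomogIdeal I → (1 : FreeAlg d) ∉ I →
      ∀ p : FreeAlg d, p ∈ IofX (XofI I) ↔ p ∈ I) ∧
    (∀ I J : TwoSidedIdeal (FreeAlg d),
      IsHomogIdeal I → (1 : FreeAlg d) ∉ I → IsHomogIdeal J → (1 : FreeAlg d) ∉ J →
      ((∀ p : FreeAlg d, p ∈ I → p ∈ J) ↔ ∀ n : ℕ, XofI J n ≤ XofI I n)) := by
  refine ⟨?_, ?_, ?_, ?_⟩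
  · intro I hI hprop
    exact ⟨SPS.XofI_zero I hprop, SPS.XofI_mul I⟩
  · intro X hX0 hX
    refine ⟨SPS.JofX X hX, SPS.mem_JofX hX, ?_, ?_, SPS.XofI_JofX hX0 hX⟩
    · intro p hp n
      rw [SPS.mem_JofX] at hp ⊢
      exact SPS.homogComp_mem_IofX n p hp
    · intro h1
      rw [SPS.mem_JofX] at h1
      exact SPS.one_not_mem_IofX h1
  · intro I hI hprop p
    exact ⟨fun h => SPS.IofX_XofI_sub I p h, fun h => SPS.sub_IofX_XofI I hI hprop p h⟩
  · intro I J hI hpropI hJ hpropJ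
    constructor
    · intro h n
      rw [SPS.XofI_eq, SPS.XofI_eq]
      exact Submodule.orthogonal_le (SPS.Ehat_mono h n)
    · intro h
      apply SPS.incl_of_Ehat_le hI
      intro n
      have := Submodule.orthogonal_le (h n)
      rwa [SPS.XofI_orth, SPS.XofI_orth] at this
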